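/- arXiv:1308.6821 — 2 statements merged into one kernel-verified Lean document; each statement's English description precedes it below -/
import Mathlib

section
/- For μ > -1/2, a nonnegative integer n, and Re(s) > 0, the Mellin transform M^μ_{2n+1}(s) = ∫_0^∞ x^{s-1} H^μ_{2n+1}(x) x^μ e^{-x²/2} dx equals (-1)^n 2^{2n} 2^{(μ+s+1)/2} (μ+3/2)_n Γ((μ+s+1)/2) · ₂F₁(-n, (μ+s+1)/2; μ+3/2; 2). -/
open Finset

/-- Rising factorial (Pochhammer symbol) on ℝ. -/
noncomputable def asc (a : ℝ) (k : ℕ) : ℝ := ∏ i ∈ Finset.range k, (a + i)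

/-- Generalized Laguerre polynomial `L_n^α(x)`. -/
noncomputable def lag (n : ℕ) (α : ℝ) (x : ℝ) : ℝ :=
  ∑ j ∈ Finset.range (n + 1),
    ((-1 : ℝ) ^ j / (j.factorial * (n - j).factorial)) * asc (α + j + 1) (n - j) * x ^ j

/-- Generalized Hermite polynomial of even degree: `H^μ_{2n}`. -/
noncomputable def Heven (μ : ℝ) (n : ℕ) (x : ℝ) : ℝ :=
  (-1 : ℝ) ^ n * 2 ^ (2 * n) * n.factorial * lag n (μ - 1/2) (x ^ 2)

/-- Generalized Hermite polynomial of odd degree: `H^μ_{2n+1}`. -/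
noncomputable def Hodd (μ : ℝ) (n : ℕ) (x : ℝ) : ℝ :=
  (-1 : ℝ) ^ n * 2 ^ (2 * n + 1) * n.factorial * x * lag n (μ + 1/2) (x ^ 2)

/-- Generalized Hermite polynomial `H^μ_n`. -/
noncomputable def GH (μ : ℝ) (n : ℕ) (x : ℝ) : ℝ :=
  if n % 2 = 0 then Heven μ (n / 2) x else Hodd μ (n / 2) x

/-- Rising factorial (Pochhammer symbol) on ℂ. -/
noncomputable def ascC (a : ℂ) (k : ℕ) : ℂ := ∏ i ∈ Finset.range k, (a + i)

/-- Terminating Gauss hypergeometric sum `₂F₁(-n, b; c; 2)`. -/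
noncomputable def F2 (n : ℕ) (b c : ℂ) : ℂ :=
  ∑ j ∈ Finset.range (n + 1),
    ascC (-(n : ℂ)) j * ascC b j / ascC c j * 2 ^ j / (j.factorial : ℂ)

/-- Mellin transform of the generalized Hermite function. -/
noncomputable def M (μ : ℝ) (n : ℕ) (s : ℂ) : ℂ :=
  ∫ x in Set.Ioi (0 : ℝ),
    (x : ℂ) ^ (s - 1) * (GH μ n x : ℂ) * ((x ^ μ : ℝ) : ℂ) * (Real.exp (-x ^ 2 / 2) : ℂ)

section Aux

open MeasureTheory Real Set

lemma gauss_int {c : ℂ} (hc : -1 < c.re) :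
    IntegrableOn (fun x : ℝ => (x:ℂ)^c * (Real.exp (-x^2/2) : ℂ)) (Set.Ioi 0) := by
  have h2 : IntegrableOn (fun x : ℝ => x ^ c.re * Real.exp (-(1/2) * x^2)) (Set.Ioi 0) :=
    integrableOn_rpow_mul_exp_neg_mul_sq (by norm_num) hc
  refine Integrable.mono' h2 ?_ ?_
  · refine ContinuousOn.aestronglyMeasurable ?_ measurableSet_Ioi
    apply ContinuousOn.mul
    · exact (Complex.continuous_ofReal.continuousOn).cpow_const
        (fun x hx => Complex.ofReal_mem_slitPlane.2 hx)
    · fun_prop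
  · filter_upwards [ae_restrict_mem measurableSet_Ioi] with x hx
    rw [Set.mem_Ioi] at hx
    rw [norm_mul, Complex.norm_cpow_eq_rpow_re_of_pos hx]
    simp only [Complex.norm_real, Real.norm_eq_abs, Real.abs_exp]
    apply le_of_eq
    ring_nf

lemma gauss_mellin {c : ℂ} (hc : -1 < c.re) :
    ∫ x in Set.Ioi (0:ℝ), (x:ℂ)^c * (Real.exp (-x^2/2) : ℂ) =
      2 ^ ((c+1)/2 - 1) * Complex.Gamma ((c+1)/2) := by
  set a : ℂ := (c+1)/2 with ha
  have ha' : 0 < a.re := by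
    rw [ha]
    simp [Complex.div_re, Complex.normSq]
    nlinarith [hc]
  have key := Complex.integral_cpow_mul_exp_neg_mul_Ioi ha' (by norm_num : (0:ℝ) < 1/2)
  have sub := MeasureTheory.integral_comp_rpow_Ioi_of_pos
    (g := fun t : ℝ => (t:ℂ)^(a-1) * Complex.exp (-((1/2:ℝ) * (t:ℂ)))) (p := 2) (by norm_num)
  have step : ∫ x in Set.Ioi (0:ℝ), (x:ℂ)^c * (Real.exp (-x^2/2) : ℂ)
      = (1/2 : ℂ) • ∫ x in Set.Ioi (0:ℝ),
          ((2:ℝ) * x ^ ((2:ℝ) - 1)) •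
            ((((x ^ (2:ℝ) : ℝ)):ℂ)^(a-1) * Complex.exp (-((1/2:ℝ) * ((x ^ (2:ℝ) : ℝ):ℂ)))) := by
    rw [← integral_smul]
    refine setIntegral_congr_fun measurableSet_Ioi (fun x hx => ?_)
    have hx' := (Set.mem_Ioi.mp hx)
    have hx0 : (x:ℂ) ≠ 0 := Complex.ofReal_ne_zero.2 hx'.ne'
    have e1 : x ^ (2:ℝ) = x ^ 2 := by
      rw [show (2:ℝ)=((2:ℕ):ℝ) by norm_num, Real.rpow_natCast]
    have e2 : ((x ^ (2:ℝ) : ℝ) : ℂ) ^ (a-1) = (x:ℂ) ^ ((2:ℂ)*(a-1)) := by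
      rw [← Complex.cpow_mul_ofReal_nonneg hx'.le 2 (a-1)]; norm_num
    have e3 : (2:ℂ)*(a-1) = c - 1 := by rw [ha]; ring
    have e4 : ((Real.exp (-x^2/2) : ℝ) : ℂ)
        = Complex.exp (-((1/2:ℝ) * ((x ^ (2:ℝ) : ℝ):ℂ))) := by
      rw [Complex.ofReal_exp]
      congr 1
      push_cast [e1]
      ring
    have e5 : (x:ℂ)^c = (x:ℂ)^(c-1) * x := by
      rw [show c = (c-1) + 1 by ring, Complex.cpow_add _ _ hx0, Complex.cpow_one]
      ring
    rw [smul_eq_mul, Complex.real_smul, e2, e3, e4, e5,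
      show (2:ℝ) - 1 = (1:ℝ) by norm_num, Real.rpow_one]
    push_cast
    ring
  rw [step, sub, key]
  have : ((1:ℂ)/((1/2:ℝ):ℂ)) = 2 := by norm_num
  rw [this, smul_eq_mul, Complex.cpow_sub _ _ (two_ne_zero), Complex.cpow_one]
  ring

lemma ascC_add (a : ℂ) (j k : ℕ) : ascC a (j + k) = ascC a j * ascC (a + j) k := by
  unfold ascC
  rw [Finset.prod_range_add]
  congr 1
  refine Finset.prod_congr rfl (fun i _ => ?_)
  push_cast; ring

lemma ascC_ne_zero {a : ℂ} (ha : 0 < a.re) (k : ℕ) : ascC a k ≠ 0 := by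
  unfold ascC
  refine Finset.prod_ne_zero_iff.2 (fun i _ => ?_)
  intro h
  have hre : a.re + (i:ℝ) = 0 := by simpa using congrArg Complex.re h
  have hnn : (0:ℝ) ≤ (i:ℝ) := Nat.cast_nonneg i
  linarith

lemma Gamma_asc {b : ℂ} (hb : 0 < b.re) (j : ℕ) :
    Complex.Gamma (b + j) = ascC b j * Complex.Gamma b := by
  induction j with
  | zero => simp [ascC]
  | succ j ih =>
    have hne : b + j ≠ 0 := by
      intro h
      have hre : b.re + (j:ℝ) = 0 := by simpa using congrArg Complex.re h
      have hnn : (0:ℝ) ≤ (j:ℝ) := Nat.cast_nonneg j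
      linarith
    have h2 : b + (j+1 : ℕ) = (b + j) + 1 := by push_cast; ring
    have hsucc : ascC b (j+1) = ascC b j * (b + j) := by
      unfold ascC; rw [Finset.prod_range_succ]
    rw [h2, Complex.Gamma_add_one _ hne, ih, hsucc]
    ring

lemma ascC_neg_nat {n j : ℕ} (h : j ≤ n) :
    ascC (-(n:ℂ)) j * ((n-j).factorial : ℂ) = (-1)^j * (n.factorial : ℂ) := by
  induction j with
  | zero => simp [ascC]
  | succ j ih =>
    have hj : j ≤ n := by omega
    have h1 : n - j = (n - (j+1)) + 1 := by omega
    have e : (-(n:ℂ) + j) = -(((n - j : ℕ) : ℂ)) := by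
      push_cast [Nat.cast_sub hj]; ring
    have hsucc : ascC (-(n:ℂ)) (j+1) = ascC (-(n:ℂ)) j * (-(n:ℂ) + j) := by
      unfold ascC; rw [Finset.prod_range_succ]
    have hfac : (n - j).factorial = (n - j) * (n - (j+1)).factorial := by
      rw [h1, Nat.factorial_succ, ← h1]
    rw [hsucc, e]
    calc ascC (-(n:ℂ)) j * -((n-j:ℕ):ℂ) * ((n-(j+1)).factorial : ℂ)
        = -(ascC (-(n:ℂ)) j * (((n-j) * (n-(j+1)).factorial : ℕ) : ℂ)) := by push_cast; ring
      _ = -(ascC (-(n:ℂ)) j * ((n-j).factorial : ℂ)) := by rw [← hfac]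
      _ = (-1)^(j+1) * (n.factorial : ℂ) := by rw [ih hj]; ring

lemma asc_cast (a : ℝ) (k : ℕ) : ((asc a k : ℝ) : ℂ) = ascC ((a:ℝ):ℂ) k := by
  unfold asc ascC
  push_cast
  rfl

end Aux

open MeasureTheory Real Set in
theorem stmt2 (μ : ℝ) (hμ : μ > -(1/2)) (n : ℕ) (s : ℂ) (hs : 0 < s.re) :
    M μ (2 * n + 1) s =
      (-1 : ℂ) ^ n * 2 ^ (2 * n) * (2 : ℂ) ^ (((μ : ℂ) + s + 1) / 2) *
        ascC ((μ : ℂ) + 3/2) n * Complex.Gamma (((μ : ℂ) + s + 1) / 2) *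
        F2 n (((μ : ℂ) + s + 1) / 2) ((μ : ℂ) + 3/2) := by
  set b : ℂ := ((μ:ℂ) + s + 1)/2 with hbdef
  set c : ℂ := (μ:ℂ) + 3/2 with hcdef
  have hbre : 0 < b.re := by
    rw [hbdef]
    simp [Complex.div_re, Complex.normSq]
    nlinarith [hs, hμ]
  have hcre : 0 < c.re := by
    rw [hcdef]
    simp [Complex.add_re]
    nlinarith [hμ]
  set coef : ℕ → ℂ := fun j =>
    (-1:ℂ)^n * 2^(2*n+1) * (n.factorial:ℂ) *
      ((-1:ℂ)^j / ((j.factorial : ℂ) * ((n-j).factorial : ℂ))) *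
      ((asc (μ+1/2+j+1) (n-j) : ℝ) : ℂ) with hcoef
  have hexp : ∀ j : ℕ, -1 < (s + (μ:ℂ) + 2*(j:ℂ)).re := by
    intro j
    simp [Complex.add_re, Complex.mul_re]
    nlinarith [hs, hμ, Nat.cast_nonneg (α := ℝ) j]
  have step1 : M μ (2*n+1) s = ∑ j ∈ Finset.range (n+1),
      coef j * ∫ x in Set.Ioi (0:ℝ),
        (x:ℂ)^(s + (μ:ℂ) + 2*(j:ℂ)) * (Real.exp (-x^2/2) : ℂ) := by
    unfold M
    have congr1 : ∀ x ∈ Set.Ioi (0:ℝ),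
        (x:ℂ)^(s-1) * (GH μ (2*n+1) x : ℂ) * ((x^μ:ℝ):ℂ) * (Real.exp (-x^2/2):ℂ)
        = ∑ j ∈ Finset.range (n+1),
            coef j * ((x:ℂ)^(s + (μ:ℂ) + 2*(j:ℂ)) * (Real.exp (-x^2/2):ℂ)) := by
      intro x hx
      have hx' := Set.mem_Ioi.mp hx
      have hx0 : (x:ℂ) ≠ 0 := Complex.ofReal_ne_zero.2 hx'.ne'
      have hGH : GH μ (2*n+1) x = Hodd μ n x := by
        unfold GH
        rw [if_neg (by omega)]
        congr 1
        omega
      have hμx : ((x^μ:ℝ):ℂ) = (x:ℂ)^((μ:ℝ):ℂ) := Complex.ofReal_cpow hx'.le μ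
      rw [hGH]
      unfold Hodd lag
      push_cast
      rw [hμx]
      simp only [Finset.mul_sum, Finset.sum_mul]
      refine Finset.sum_congr rfl (fun j hj => ?_)
      have hpow : (x:ℂ)^(s + (μ:ℂ) + 2*(j:ℂ))
          = (x:ℂ)^(s-1) * (x:ℂ)^((μ:ℝ):ℂ) * (x:ℂ)^(2*j+1) := by
        rw [show s + (μ:ℂ) + 2*(j:ℂ) = (s-1) + (((μ:ℝ):ℂ) + ((2*j+1 : ℕ):ℂ)) by
            push_cast; ring,
          Complex.cpow_add _ _ hx0, Complex.cpow_add _ _ hx0, Complex.cpow_natCast]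
        ring
      rw [hcoef, hpow]
      push_cast
      ring
    rw [MeasureTheory.setIntegral_congr_fun measurableSet_Ioi congr1,
      MeasureTheory.integral_finset_sum _ (fun j hj => ((gauss_int (hexp j)).const_mul _))]
    refine Finset.sum_congr rfl (fun j hj => ?_)
    rw [MeasureTheory.integral_const_mul]
  have intval : ∀ j : ℕ,
      (∫ x in Set.Ioi (0:ℝ), (x:ℂ)^(s + (μ:ℂ) + 2*(j:ℂ)) * (Real.exp (-x^2/2):ℂ))
        = 2 ^ (b + j - 1) * Complex.Gamma (b + j) := by
    intro j
    rw [gauss_mellin (hexp j)]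
    have : (s + (μ:ℂ) + 2*(j:ℂ) + 1)/2 = b + j := by rw [hbdef]; ring
    rw [this]
  rw [step1]
  unfold F2
  rw [Finset.mul_sum]
  refine Finset.sum_congr rfl (fun j hj => ?_)
  have hj' : j ≤ n := by
    have := Finset.mem_range.mp hj; omega
  rw [intval j, Gamma_asc hbre j]
  have hcn : ascC c n = ascC c j * ascC (c + j) (n - j) := by
    rw [← ascC_add]
    congr 1
    omega
  have hcast : ((asc (μ+1/2+j+1) (n-j) : ℝ):ℂ) = ascC (c + j) (n-j) := by
    rw [asc_cast]
    congr 1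
    rw [hcdef]
    push_cast
    ring
  have h2j : (2:ℂ)^(b + (j:ℂ) - 1) = 2^b * 2^j * (2:ℂ)⁻¹ := by
    rw [show b + (j:ℂ) - 1 = b + ((j:ℂ) + (-1)) by ring,
      Complex.cpow_add _ _ two_ne_zero, Complex.cpow_add _ _ two_ne_zero,
      Complex.cpow_natCast, Complex.cpow_neg, Complex.cpow_one]
    ring
  have hfj : ((j.factorial : ℂ)) ≠ 0 := Nat.cast_ne_zero.2 (Nat.factorial_ne_zero j)
  have hfnj : (((n-j).factorial : ℂ)) ≠ 0 := Nat.cast_ne_zero.2 (Nat.factorial_ne_zero (n-j))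
  have hascj : ascC c j ≠ 0 := ascC_ne_zero hcre j
  have hneg' : ascC (-(n:ℂ)) j = (-1)^j * (n.factorial:ℂ) / ((n-j).factorial : ℂ) := by
    rw [eq_div_iff hfnj]
    exact ascC_neg_nat hj'
  simp only [hcoef]
  rw [hcast, h2j, hcn, hneg']
  field_simp
  ring
end

section
/- (Addition formula, odd case) For all real α, β > -1/2, nonnegative integer n, and real x, y with x²+y² > 0: (xy/√(x²+y²)) H^{α+β+3/2}_{2n+1}(√(x²+y²)) = (1/2) Σ_{k=0}^n C(n,k) H^α_{2(n-k)+1}(x) H^β_{2k+1}(y). -/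
open Finset

lemma asc_succ (a : ℝ) (k : ℕ) : asc a (k+1) = asc a k * (a + k) := by
  simp [asc, Finset.prod_range_succ]

lemma vand (a b : ℝ) (N : ℕ) :
    ∑ j ∈ Finset.range (N+1), (N.choose j : ℝ) * asc a j * asc b (N - j) = asc (a+b) N := by
  induction N with
  | zero => simp [asc]
  | succ N ih =>
    have step : ∀ j ∈ Finset.range (N+1),
        (N.choose j : ℝ) * asc a j * asc b (N - j + 1)
          = (N.choose j : ℝ) * asc a j * asc b (N - j) * (b + (N - j : ℕ)) := by
      intro j hj
      rw [asc_succ]; ring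
    have shift : ∑ j ∈ Finset.range (N+1), (N.choose j : ℝ) * asc a j * asc b (N - j + 1)
        = (∑ j ∈ Finset.range N, (N.choose (j+1) : ℝ) * asc a (j+1) * asc b (N - j)) + asc b (N+1) := by
      rw [Finset.sum_range_succ']
      congr 1
      · refine Finset.sum_congr rfl fun j hj => ?_
        simp only [Finset.mem_range] at hj
        congr 2
        omega
      · simp [asc]
    have main : ∑ j ∈ Finset.range (N+2), ((N+1).choose j : ℝ) * asc a j * asc b (N + 1 - j)
        = (∑ j ∈ Finset.range (N+1), (N.choose j : ℝ) * asc a (j+1) * asc b (N - j))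
          + ∑ j ∈ Finset.range (N+1), (N.choose j : ℝ) * asc a j * asc b (N - j) * (b + (N - j : ℕ)) := by
      rw [Finset.sum_range_succ']
      have e0 : ((N+1).choose 0 : ℝ) * asc a 0 * asc b (N + 1 - 0) = asc b (N+1) := by
        simp [asc]
      rw [e0]
      have e1 : ∀ j ∈ Finset.range (N+1),
          ((N+1).choose (j+1) : ℝ) * asc a (j+1) * asc b (N + 1 - (j+1))
            = (N.choose j : ℝ) * asc a (j+1) * asc b (N - j)
              + (N.choose (j+1) : ℝ) * asc a (j+1) * asc b (N - j) := by
        intro j hj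
        have : (N+1).choose (j+1) = N.choose j + N.choose (j+1) := Nat.choose_succ_succ N j
        have hsub : N + 1 - (j+1) = N - j := by omega
        rw [this, hsub]
        push_cast
        ring
      rw [Finset.sum_congr rfl e1, Finset.sum_add_distrib]
      have hB : ∑ j ∈ Finset.range (N+1), (N.choose (j+1):ℝ) * asc a (j+1) * asc b (N-j)
          = ∑ j ∈ Finset.range N, (N.choose (j+1):ℝ) * asc a (j+1) * asc b (N-j) := by
        rw [Finset.sum_range_succ]
        simp
      rw [hB, ← Finset.sum_congr rfl step, shift]
      ring
    have comb : ∀ j ∈ Finset.range (N+1),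
        (N.choose j : ℝ) * asc a (j+1) * asc b (N - j)
          + (N.choose j : ℝ) * asc a j * asc b (N - j) * (b + (N - j : ℕ))
          = (N.choose j : ℝ) * asc a j * asc b (N - j) * (a + b + N) := by
      intro j hj
      simp only [Finset.mem_range] at hj
      rw [asc_succ]
      have : ((N - j : ℕ) : ℝ) = N - j := by
        have : j ≤ N := by omega
        push_cast [this]; ring
      rw [this]
      push_cast
      ring
    calc ∑ j ∈ Finset.range (N+1+1), ((N+1).choose j : ℝ) * asc a j * asc b (N + 1 - j)
        = (∑ j ∈ Finset.range (N+1), (N.choose j : ℝ) * asc a (j+1) * asc b (N - j))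
          + ∑ j ∈ Finset.range (N+1), (N.choose j : ℝ) * asc a j * asc b (N - j) * (b + (N - j : ℕ)) := main
      _ = ∑ j ∈ Finset.range (N+1), (N.choose j : ℝ) * asc a j * asc b (N - j) * (a + b + N) := by
          rw [← Finset.sum_add_distrib]
          exact Finset.sum_congr rfl comb
      _ = (∑ j ∈ Finset.range (N+1), (N.choose j : ℝ) * asc a j * asc b (N - j)) * (a + b + N) := by
          rw [← Finset.sum_mul]
      _ = asc (a+b) N * (a + b + N) := by rw [ih]
      _ = asc (a+b) (N+1) := by rw [asc_succ]

lemma lag_add (a b u v : ℝ) (n : ℕ) :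
    lag n (a + b + 1) (u + v)
      = ∑ k ∈ Finset.range (n+1), lag (n-k) a u * lag k b v := by
  have hR : ∑ k ∈ Finset.range (n+1), lag (n-k) a u * lag k b v
      = ∑ z ∈ (Finset.range (n+1)).sigma
          (fun k => Finset.range (n-k+1) ×ˢ Finset.range (k+1)),
          (((-1:ℝ)^z.2.1 / (z.2.1.factorial * (n - z.1 - z.2.1).factorial))
              * asc (a + z.2.1 + 1) (n - z.1 - z.2.1) * u ^ z.2.1)
          * (((-1:ℝ)^z.2.2 / (z.2.2.factorial * (z.1 - z.2.2).factorial))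
              * asc (b + z.2.2 + 1) (z.1 - z.2.2) * v ^ z.2.2) := by
    rw [Finset.sum_sigma]
    refine Finset.sum_congr rfl fun k hk => ?_
    rw [lag, lag, Finset.sum_mul_sum, ← Finset.sum_product']
  have hL : lag n (a+b+1) (u+v)
      = ∑ p ∈ (Finset.range (n+1)).sigma (fun j => Finset.range (j+1)),
          ((-1:ℝ)^p.1 / (p.1.factorial * (n - p.1).factorial)) * asc (a+b+1+p.1+1) (n-p.1)
            * (u ^ p.2 * v ^ (p.1 - p.2) * (p.1.choose p.2)) := by
    rw [lag, Finset.sum_sigma]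
    refine Finset.sum_congr rfl fun j hj => ?_
    rw [add_pow, Finset.mul_sum]
  have key : ∀ p ∈ (Finset.range (n+1)).sigma (fun j => Finset.range (j+1)),
      ((-1:ℝ)^p.1 / (p.1.factorial * (n - p.1).factorial)) * asc (a+b+1+p.1+1) (n-p.1)
        * (u ^ p.2 * v ^ (p.1 - p.2) * (p.1.choose p.2))
      = ∑ t ∈ Finset.range (n - p.1 + 1),
          (((-1:ℝ)^p.2 / (p.2.factorial * (n - ((p.1 - p.2) + t) - p.2).factorial))
              * asc (a + p.2 + 1) (n - ((p.1 - p.2) + t) - p.2) * u ^ p.2)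
          * (((-1:ℝ)^(p.1 - p.2) / ((p.1 - p.2).factorial * (((p.1 - p.2) + t) - (p.1 - p.2)).factorial))
              * asc (b + ((p.1 - p.2 : ℕ) : ℝ) + 1) (((p.1 - p.2) + t) - (p.1 - p.2)) * v ^ (p.1 - p.2)) := by
    rintro ⟨j, i⟩ hp
    dsimp only
    simp only [Finset.mem_sigma, Finset.mem_range] at hp
    obtain ⟨hj, hi⟩ := hp
    have hij : i ≤ j := by omega
    have hjn : j ≤ n := by omega
    set m := j - i with hm
    set N := n - j with hN
    have hmi : i + m = j := by omega
    have h1 : ∀ t ∈ Finset.range (N+1),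
        (((-1:ℝ)^i / (i.factorial * (n - (m + t) - i).factorial))
            * asc (a + i + 1) (n - (m + t) - i) * u ^ i)
        * (((-1:ℝ)^m / (m.factorial * ((m + t) - m).factorial))
            * asc (b + m + 1) ((m + t) - m) * v ^ m)
        = ((-1:ℝ)^j * u^i * v^m / (i.factorial * m.factorial * N.factorial))
            * ((N.choose t : ℝ) * asc (b + m + 1) t * asc (a + i + 1) (N - t)) := by
      intro t ht
      simp only [Finset.mem_range] at ht
      have ht' : t ≤ N := by omega
      have e1 : n - (m + t) - i = N - t := by omega
      have e2 : (m + t) - m = t := by omega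
      rw [e1, e2, Nat.cast_choose ℝ ht']
      have hsgn : ((-1:ℝ)^i) * ((-1:ℝ)^m) = (-1:ℝ)^j := by rw [← pow_add, hmi]
      have f1 : (i.factorial : ℝ) ≠ 0 := by positivity
      have f2 : (m.factorial : ℝ) ≠ 0 := by positivity
      have f3 : (N.factorial : ℝ) ≠ 0 := by positivity
      have f4 : (t.factorial : ℝ) ≠ 0 := by positivity
      have f5 : ((N-t).factorial : ℝ) ≠ 0 := by positivity
      field_simp
      linear_combination (asc (a + i + 1) (N - t) * asc (b + m + 1) t * u^i * v^m) * hsgn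
    rw [Finset.sum_congr rfl h1, ← Finset.mul_sum]
    have harg : (b + (m:ℝ) + 1) + (a + (i:ℝ) + 1) = a+b+1+(j:ℝ)+1 := by
      have : ((i:ℝ) + m) = j := by exact_mod_cast congrArg (Nat.cast : ℕ → ℝ) hmi
      linarith [this]
    rw [vand, harg]
    have hch : ((j.choose i : ℕ) : ℝ) = j.factorial / (i.factorial * m.factorial) := by
      rw [Nat.cast_choose ℝ hij]
    rw [hch]
    have f1 : (i.factorial : ℝ) ≠ 0 := by positivity
    have f2 : (m.factorial : ℝ) ≠ 0 := by positivity
    have f3 : (N.factorial : ℝ) ≠ 0 := by positivity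
    have f6 : (j.factorial : ℝ) ≠ 0 := by positivity
    field_simp
  rw [hL, hR, Finset.sum_congr rfl key]
  refine (Finset.sum_sigma' _ _ _).trans ?_
  refine Finset.sum_nbij' (fun z => (⟨(z.1.1 - z.1.2) + z.2, (z.1.2, z.1.1 - z.1.2)⟩ : (_ : ℕ) × (ℕ × ℕ)))
    (fun w => (⟨⟨w.2.1 + w.2.2, w.2.1⟩, w.1 - w.2.2⟩ : (_ : (_ : ℕ) × ℕ) × ℕ)) ?_ ?_ ?_ ?_ ?_
  · rintro ⟨⟨j, i⟩, t⟩ h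
    simp only [Finset.mem_sigma, Finset.mem_range, Finset.mem_product] at h ⊢
    omega
  · rintro ⟨k, p, q⟩ h
    simp only [Finset.mem_sigma, Finset.mem_range, Finset.mem_product] at h ⊢
    omega
  · rintro ⟨⟨j, i⟩, t⟩ h
    simp only [Finset.mem_sigma, Finset.mem_range, Finset.mem_product] at h
    dsimp only
    have e1 : i + (j - i) = j := by omega
    have e2 : (j - i + t) - (j - i) = t := by omega
    simp only [e1, e2]
  · rintro ⟨k, p, q⟩ h
    simp only [Finset.mem_sigma, Finset.mem_range, Finset.mem_product] at h
    dsimp only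
    have e1 : (p + q) - p = q := by omega
    have e2 : q + (k - q) = k := by omega
    simp only [e1, e2]
  · rintro ⟨⟨j, i⟩, t⟩ h
    rfl

theorem stmt17 (α β : ℝ) (hα : α > -(1/2)) (hβ : β > -(1/2)) (n : ℕ) (x y : ℝ)
    (hxy : 0 < x ^ 2 + y ^ 2) :
    (x * y / Real.sqrt (x ^ 2 + y ^ 2)) * Hodd (α + β + 3/2) n (Real.sqrt (x ^ 2 + y ^ 2)) =
      (1 / 2) * ∑ k ∈ Finset.range (n + 1),
        (n.choose k : ℝ) * Hodd α (n - k) x * Hodd β k y := by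
  set s := Real.sqrt (x ^ 2 + y ^ 2) with hsdef
  have hs2 : s ^ 2 = x ^ 2 + y ^ 2 := Real.sq_sqrt hxy.le
  have hs : s ≠ 0 := by
    have : 0 < s := Real.sqrt_pos.mpr hxy
    exact this.ne'
  simp only [Hodd]
  rw [hs2]
  have harg : α + β + 3/2 + 1/2 = (α + 1/2) + (β + 1/2) + 1 := by ring
  rw [harg, lag_add (α + 1/2) (β + 1/2) (x^2) (y^2) n]
  simp only [Finset.mul_sum]
  refine Finset.sum_congr rfl fun k hk => ?_
  simp only [Finset.mem_range] at hk
  have hk' : k ≤ n := by omega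
  have hfac : ((n.choose k : ℕ) : ℝ) * k.factorial * (n-k).factorial = n.factorial := by
    exact_mod_cast Nat.choose_mul_factorial_mul_factorial hk'
  have hsign : ((-1:ℝ))^(n-k) * (-1)^k = (-1)^n := by
    rw [← pow_add]
    congr 1
    omega
  have hpow2 : (2:ℝ)^(2*(n-k)+1) * 2^(2*k+1) = 2 * 2^(2*n+1) := by
    rw [← pow_add, ← pow_succ']
    congr 1
    omega
  have hc : ((n.choose k : ℕ) : ℝ) * ((-1:ℝ)^(n-k) * 2^(2*(n-k)+1) * (n-k).factorial)
      * ((-1:ℝ)^k * 2^(2*k+1) * k.factorial) = 2 * ((-1:ℝ)^n * 2^(2*n+1) * n.factorial) := by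
    calc ((n.choose k : ℕ) : ℝ) * ((-1:ℝ)^(n-k) * 2^(2*(n-k)+1) * (n-k).factorial)
          * ((-1:ℝ)^k * 2^(2*k+1) * k.factorial)
        = (((n.choose k : ℕ) : ℝ) * k.factorial * (n-k).factorial)
            * (((-1:ℝ))^(n-k) * (-1)^k) * ((2:ℝ)^(2*(n-k)+1) * 2^(2*k+1)) := by ring
      _ = (n.factorial : ℝ) * (-1)^n * (2 * 2^(2*n+1)) := by rw [hfac, hsign, hpow2]
      _ = 2 * ((-1:ℝ)^n * 2^(2*n+1) * n.factorial) := by ring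
  set L1 := lag (n-k) (α + 1/2) (x^2) with hL1
  set L2 := lag k (β + 1/2) (y^2) with hL2
  field_simp
  linear_combination (-(x * y * L1 * L2)) * hc
end
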